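/- Let X⁻ ∈ ℝ^{(n-1)×d} be a data matrix with rows xᵢᵀ, D_w a diagonal matrix with entries ℓ''(wᵀxᵢ, yᵢ), H_w = (X⁻)ᵀ D_w X⁻ + λ(n-1)I, and suppose ℓ'' is γ-Lipschitz and ‖xᵢ‖₂ ≤ 1. Then for the Newton update w⁻ = w* + H_{w*}^{-1}Δ, the gradient residual satisfies ‖∇L(w⁻; D')‖₂ ≤ γ ‖X⁻‖₂ · ‖H_{w*}^{-1}Δ‖₂ · ‖X⁻ H_{w*}^{-1}Δ‖₂. -/

import Mathlib

open scoped RealInnerProductSpace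


lemma aux_sum_smul_le {d n : ℕ} (x : Fin (n + 1) → EuclideanSpace ℝ (Fin d))
    (X : EuclideanSpace ℝ (Fin d) →L[ℝ] EuclideanSpace ℝ (Fin n))
    (hX : ∀ (w : EuclideanSpace ℝ (Fin d)) (i : Fin n), X w i = ⟪x i.castSucc, w⟫)
    (c : EuclideanSpace ℝ (Fin n)) :
    ‖∑ i, c i • x i.castSucc‖ ≤ ‖X‖ * ‖c‖ := by
  set v := ∑ i, c i • x i.castSucc with hv
  have key : ‖v‖ ^ 2 ≤ (‖X‖ * ‖c‖) * ‖v‖ := by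
    calc ‖v‖ ^ 2 = ⟪v, v⟫ := (real_inner_self_eq_norm_sq v).symm
    _ = ∑ i, c i * ⟪x i.castSucc, v⟫ := by
        rw [hv, sum_inner]
        simp only [real_inner_smul_left]
    _ = ⟪c, X v⟫ := by
        rw [PiLp.inner_apply]
        simp [hX, RCLike.inner_apply, conj_trivial]
        exact Finset.sum_congr rfl fun i _ => mul_comm _ _
    _ ≤ ‖c‖ * ‖X v‖ := real_inner_le_norm _ _
    _ ≤ ‖c‖ * (‖X‖ * ‖v‖) := by
        have := X.le_opNorm v
        have hc : (0:ℝ) ≤ ‖c‖ := norm_nonneg _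
        nlinarith
    _ = (‖X‖ * ‖c‖) * ‖v‖ := by ring
  rcases eq_or_lt_of_le (norm_nonneg v) with h0 | h0
  · rw [← h0]; positivity
  · nlinarith [key, h0]

lemma aux_norm_le {n : ℕ} (c b : EuclideanSpace ℝ (Fin n)) (K : ℝ) (hK : 0 ≤ K)
    (h : ∀ i, |c i| ≤ K * |b i|) : ‖c‖ ≤ K * ‖b‖ := by
  rw [EuclideanSpace.norm_eq, EuclideanSpace.norm_eq, ← Real.sqrt_sq hK,
    ← Real.sqrt_mul (by positivity)]
  apply Real.sqrt_le_sqrt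
  rw [Finset.mul_sum]
  apply Finset.sum_le_sum; intro i _
  have hi := h i
  simp only [Real.norm_eq_abs]
  nlinarith [abs_nonneg (c i), abs_nonneg (b i), sq_abs (c i), sq_abs (b i)]

set_option maxHeartbeats 1000000 in
/-- Corollary 1 (data-dependent gradient residual bound): with `X⁻` the
leave-one-out data matrix (as an operator, with rows `xᵢᵀ`), the Newton update
`w⁻ = w* + H⁻¹Δ` has leave-one-out gradient residual norm at most
`γ ‖X⁻‖ ‖H⁻¹Δ‖ ‖X⁻ H⁻¹Δ‖` (spectral norm on operators). -/
theorem data_dependent_residual_bound {d n : ℕ} (hn : 0 < n)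
    (lam C : ℝ) (hlam : 0 < lam) (γ : NNReal)
    (ℓ : ℝ → ℝ → ℝ) (ℓ' : ℝ → ℝ → ℝ) (ℓ'' : ℝ → ℝ → ℝ)
    (hderiv : ∀ y z, HasDerivAt (fun t => ℓ t y) (ℓ' z y) z)
    (hderiv2 : ∀ y z, HasDerivAt (fun t => ℓ' t y) (ℓ'' z y) z)
    (hlip : ∀ y, LipschitzWith γ (fun z => ℓ'' z y))
    (x : Fin (n + 1) → EuclideanSpace ℝ (Fin d)) (y : Fin (n + 1) → ℝ)
    (hx : ∀ i, ‖x i‖ ≤ 1)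
    (hgrad : ∀ i (w : EuclideanSpace ℝ (Fin d)), ‖ℓ' ⟪x i, w⟫ (y i) • x i‖ ≤ C)
    (L : EuclideanSpace ℝ (Fin d) → ℝ)
    (hL : ∀ w, L w = ∑ i, ℓ ⟪x i, w⟫ (y i) + lam * (n + 1) / 2 * ‖w‖ ^ 2)
    (wstar : EuclideanSpace ℝ (Fin d))
    (hmin : IsMinOn L Set.univ wstar)
    (Δ : EuclideanSpace ℝ (Fin d))
    (hΔ : Δ = lam • wstar +
      ℓ' ⟪x (Fin.last n), wstar⟫ (y (Fin.last n)) • x (Fin.last n))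
    -- the Hessian of the leave-one-out loss `L(·; D')` at `w*`:
    (H : EuclideanSpace ℝ (Fin d) →L[ℝ] EuclideanSpace ℝ (Fin d))
    (hH : H = (∑ i : Fin n,
        ℓ'' ⟪x i.castSucc, wstar⟫ (y i.castSucc) •
          ((innerSL ℝ (x i.castSucc)).smulRight (x i.castSucc)))
      + (lam * n) • ContinuousLinearMap.id ℝ _)
    (Hinv : EuclideanSpace ℝ (Fin d) →L[ℝ] EuclideanSpace ℝ (Fin d))
    (hinv₁ : H.comp Hinv = ContinuousLinearMap.id ℝ _)
    (hinv₂ : Hinv.comp H = ContinuousLinearMap.id ℝ _)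
    (wminus : EuclideanSpace ℝ (Fin d)) (hwminus : wminus = wstar + Hinv Δ)
    -- the gradient of the leave-one-out loss `L(·; D')`:
    (gradL' : EuclideanSpace ℝ (Fin d) → EuclideanSpace ℝ (Fin d))
    (hgradL' : ∀ w, gradL' w = (∑ i : Fin n,
        ℓ' ⟪x i.castSucc, w⟫ (y i.castSucc) • x i.castSucc) + (lam * n) • w)
    -- the leave-one-out data matrix `X⁻`, viewed as an operator with rows `xᵢᵀ`:
    (X : EuclideanSpace ℝ (Fin d) →L[ℝ] EuclideanSpace ℝ (Fin n))
    (hX : ∀ (w : EuclideanSpace ℝ (Fin d)) (i : Fin n), X w i = ⟪x i.castSucc, w⟫) :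
    ‖gradL' wminus‖ ≤ (γ : ℝ) * ‖X‖ * ‖Hinv Δ‖ * ‖X (Hinv Δ)‖ := by
  set u := Hinv Δ with hu
  -- H u = Δ
  have hHu : H u = Δ := by
    have := DFunLike.congr_fun hinv₁ Δ
    simpa using this
  -- full gradient at wstar vanishes
  have hfder : HasFDerivAt L
      ((∑ i, ℓ' ⟪x i, wstar⟫ (y i) • innerSL ℝ (x i)) +
        (lam * (n + 1) / 2) • (2 • innerSL ℝ wstar)) wstar := by
    rw [funext hL]
    apply HasFDerivAt.add
    · apply HasFDerivAt.fun_sum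
      intro i _
      exact (hderiv (y i) ⟪x i, wstar⟫).comp_hasFDerivAt wstar (innerSL ℝ (x i)).hasFDerivAt
    · exact ((hasStrictFDerivAt_norm_sq wstar).hasFDerivAt).const_mul _
  have hG0 : ((∑ i, ℓ' ⟪x i, wstar⟫ (y i) • innerSL ℝ (x i)) +
        (lam * (n + 1) / 2) • (2 • innerSL ℝ wstar)) = 0 :=
    (hmin.isLocalMin Filter.univ_mem).hasFDerivAt_eq_zero hfder
  have hfull : (∑ i : Fin (n + 1), ℓ' ⟪x i, wstar⟫ (y i) • x i)
      + (lam * (n + 1)) • wstar = 0 := by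
    set g := (∑ i : Fin (n + 1), ℓ' ⟪x i, wstar⟫ (y i) • x i)
      + (lam * (n + 1)) • wstar with hg
    have h2 := DFunLike.congr_fun hG0 g
    simp only [ContinuousLinearMap.add_apply, ContinuousLinearMap.sum_apply,
      ContinuousLinearMap.smul_apply, innerSL_apply_apply, ContinuousLinearMap.zero_apply,
      smul_eq_mul, nsmul_eq_mul] at h2
    have h1 : ⟪g, g⟫ = 0 := by
      rw [hg, inner_add_left, sum_inner]
      simp only [real_inner_smul_left]
      rw [hg] at h2
      linarith [h2]
    exact inner_self_eq_zero.mp h1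
  -- gradL' wstar = -Δ
  have hw0 : gradL' wstar = -Δ := by
    rw [Fin.sum_univ_castSucc (fun i => ℓ' ⟪x i, wstar⟫ (y i) • x i),
      show lam * ((n : ℝ) + 1) = lam * n + lam by ring, add_smul] at hfull
    rw [hgradL', hΔ]
    have h2 : ((∑ i : Fin n, ℓ' ⟪x i.castSucc, wstar⟫ (y i.castSucc) • x i.castSucc)
        + (lam * n) • wstar)
        + (lam • wstar + ℓ' ⟪x (Fin.last n), wstar⟫ (y (Fin.last n)) • x (Fin.last n)) = 0 := by
      rw [← hfull]; abel
    exact eq_neg_of_add_eq_zero_left h2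
  -- H u = Δ, expanded
  have hΔeq : Δ = (∑ i : Fin n, (ℓ'' ⟪x i.castSucc, wstar⟫ (y i.castSucc)
      * ⟪x i.castSucc, u⟫) • x i.castSucc) + (lam * n) • u := by
    conv_lhs => rw [← hHu, hH]
    simp [ContinuousLinearMap.add_apply, ContinuousLinearMap.sum_apply,
      ContinuousLinearMap.smul_apply, ContinuousLinearMap.smulRight_apply,
      innerSL_apply_apply, smul_smul]
  -- the path function and its derivative
  set ψ : ℝ → EuclideanSpace ℝ (Fin d) := fun t => ∑ i : Fin n,
    ((ℓ'' ⟪x i.castSucc, wstar + t • u⟫ (y i.castSucc)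
      - ℓ'' ⟪x i.castSucc, wstar⟫ (y i.castSucc)) * ⟪x i.castSucc, u⟫) • x i.castSucc with hψ
  have hinner : ∀ (v : EuclideanSpace ℝ (Fin d)) (t : ℝ),
      HasDerivAt (fun s : ℝ => ⟪v, wstar + s • u⟫) ⟪v, u⟫ t := by
    intro v t
    have heq : (fun s : ℝ => ⟪v, wstar + s • u⟫) = fun s => ⟪v, wstar⟫ + s * ⟪v, u⟫ := by
      funext s; rw [inner_add_right, real_inner_smul_right]
    rw [heq]
    simpa using ((hasDerivAt_id t).mul_const ⟪v, u⟫).const_add ⟪v, wstar⟫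
  have hg' : ∀ t : ℝ, HasDerivAt (fun s => gradL' (wstar + s • u) - s • Δ) (ψ t) t := by
    intro t
    have h1 : HasDerivAt (fun s : ℝ =>
        ((∑ i : Fin n, ℓ' ⟪x i.castSucc, wstar + s • u⟫ (y i.castSucc) • x i.castSucc)
          + (lam * n) • (wstar + s • u)) - s • Δ)
        (((∑ i : Fin n, (ℓ'' ⟪x i.castSucc, wstar + t • u⟫ (y i.castSucc)
            * ⟪x i.castSucc, u⟫) • x i.castSucc) + (lam * n) • u) - Δ) t := by
      apply HasDerivAt.sub
      · apply HasDerivAt.add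
        · apply HasDerivAt.fun_sum
          intro i _
          exact ((hderiv2 (y i.castSucc) _).comp t (hinner (x i.castSucc) t)).smul_const _
        · have : HasDerivAt (fun s : ℝ => wstar + s • u) u t := by
            simpa using ((hasDerivAt_id t).smul_const u).const_add wstar
          exact this.const_smul (lam * (n : ℝ))
      · simpa using (hasDerivAt_id t).smul_const Δ
    have h2 : (fun s : ℝ => gradL' (wstar + s • u) - s • Δ) = (fun s : ℝ =>
        ((∑ i : Fin n, ℓ' ⟪x i.castSucc, wstar + s • u⟫ (y i.castSucc) • x i.castSucc)
          + (lam * n) • (wstar + s • u)) - s • Δ) := by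
      funext s; rw [hgradL']
    rw [h2]
    convert h1 using 1
    rw [hψ]
    simp only [sub_mul, sub_smul, Finset.sum_sub_distrib]
    conv_rhs => rw [hΔeq]
    abel
  -- bound on the derivative
  have hbound : ∀ t ∈ Set.Icc (0:ℝ) 1, ‖ψ t‖ ≤ (γ : ℝ) * ‖X‖ * ‖u‖ * ‖X u‖ := by
    intro t ht
    set c : EuclideanSpace ℝ (Fin n) := (WithLp.equiv 2 (Fin n → ℝ)).symm fun i =>
      (ℓ'' ⟪x i.castSucc, wstar + t • u⟫ (y i.castSucc)
        - ℓ'' ⟪x i.castSucc, wstar⟫ (y i.castSucc)) * ⟪x i.castSucc, u⟫ with hc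
    have h1 : ψ t = ∑ i, c i • x i.castSucc := by
      rw [hψ]
      refine Finset.sum_congr rfl fun i _ => ?_
      rw [hc]; rfl
    have h2 := aux_sum_smul_le x X hX c
    have h3 : ‖c‖ ≤ ((γ : ℝ) * ‖u‖) * ‖X u‖ := by
      apply aux_norm_le c (X u) _ (by positivity)
      intro i
      have hb : |⟪x i.castSucc, u⟫| ≤ ‖u‖ := by
        calc |⟪x i.castSucc, u⟫| ≤ ‖x i.castSucc‖ * ‖u‖ := abs_real_inner_le_norm _ _
        _ ≤ 1 * ‖u‖ := by
            have := hx i.castSucc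
            have : (0:ℝ) ≤ ‖u‖ := norm_nonneg _
            nlinarith [hx i.castSucc, norm_nonneg (x i.castSucc)]
        _ = ‖u‖ := one_mul _
      have hdiff : |ℓ'' ⟪x i.castSucc, wstar + t • u⟫ (y i.castSucc)
          - ℓ'' ⟪x i.castSucc, wstar⟫ (y i.castSucc)| ≤ (γ : ℝ) * ‖u‖ := by
        have hl := (hlip (y i.castSucc)).dist_le_mul
          ⟪x i.castSucc, wstar + t • u⟫ ⟪x i.castSucc, wstar⟫
        rw [Real.dist_eq, Real.dist_eq] at hl
        have harg : ⟪x i.castSucc, wstar + t • u⟫ - ⟪x i.castSucc, wstar⟫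
            = t * ⟪x i.castSucc, u⟫ := by
          rw [inner_add_right, real_inner_smul_right]; ring
        rw [harg] at hl
        have ht0 := ht.1
        have ht1 := ht.2
        have : |t * ⟪x i.castSucc, u⟫| ≤ ‖u‖ := by
          rw [abs_mul, abs_of_nonneg ht0]
          nlinarith [abs_nonneg ⟪x i.castSucc, u⟫]
        calc _ ≤ (γ:ℝ) * |t * ⟪x i.castSucc, u⟫| := hl
        _ ≤ (γ:ℝ) * ‖u‖ := by
            have := γ.coe_nonneg; nlinarith
      have hci : c i = (ℓ'' ⟪x i.castSucc, wstar + t • u⟫ (y i.castSucc)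
          - ℓ'' ⟪x i.castSucc, wstar⟫ (y i.castSucc)) * ⟪x i.castSucc, u⟫ := by
        rw [hc]; rfl
      rw [hci, hX u i, abs_mul]
      have h4 : (0:ℝ) ≤ |⟪x i.castSucc, u⟫| := abs_nonneg _
      calc |ℓ'' ⟪x i.castSucc, wstar + t • u⟫ (y i.castSucc)
          - ℓ'' ⟪x i.castSucc, wstar⟫ (y i.castSucc)| * |⟪x i.castSucc, u⟫|
          ≤ ((γ:ℝ) * ‖u‖) * |⟪x i.castSucc, u⟫| := by nlinarith
      _ = (γ:ℝ) * ‖u‖ * |⟪x i.castSucc, u⟫| := rfl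
    rw [h1]
    calc ‖∑ i, c i • x i.castSucc‖ ≤ ‖X‖ * ‖c‖ := h2
    _ ≤ ‖X‖ * (((γ:ℝ) * ‖u‖) * ‖X u‖) := by
        have := norm_nonneg X; nlinarith [norm_nonneg c]
    _ = (γ : ℝ) * ‖X‖ * ‖u‖ * ‖X u‖ := by ring
  -- mean value inequality
  have hmvt := norm_image_sub_le_of_norm_deriv_le_segment' (a := 0) (b := 1)
    (f := fun s => gradL' (wstar + s • u) - s • Δ) (f' := ψ)
    (C := (γ : ℝ) * ‖X‖ * ‖u‖ * ‖X u‖)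
    (fun t _ => (hg' t).hasDerivWithinAt)
    (fun t ht => hbound t (Set.mem_Icc_of_Ico ht))
    1 (by norm_num)
  have hfin : (gradL' (wstar + (1:ℝ) • u) - (1:ℝ) • Δ)
      - (gradL' (wstar + (0:ℝ) • u) - (0:ℝ) • Δ) = gradL' wminus := by
    rw [one_smul, zero_smul, zero_smul, add_zero, sub_zero, hw0, hwminus]
    abel_nf
    simp
  rw [hfin] at hmvt
  simpa using hmvt
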